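/- Let M be a 2×3 integer matrix with columns m₁=(x₁,y₁), m₂=(x₂,y₂), m₃=(x₃,y₃), xᵢ > 0, y₁/x₁ < y₂/x₂ < y₃/x₃, and suppose Y₁₂ = x₁y₂-y₁x₂, Y₁₃ = x₁y₃-y₁x₃, Y₂₃ = x₂y₃-y₂x₃ are pairwise relatively prime. Then for every (n₁,n₂) ∈ ℤ² in the closed cone spanned by m₁ and m₂, t((n₁,n₂)|M) = (n₂x₁-n₁y₁)/(Y₁₂Y₁₃) - {Y₁₃⁻¹(n₂x₁-n₁y₁)/Y₁₂} - {Y₁₂⁻¹(n₂x₁-n₁y₁)/Y₁₃} + 1, where Y₁₃⁻¹Y₁₃ ≡ 1 (mod Y₁₂) and Y₁₂⁻¹Y₁₂ ≡ 1 (mod Y₁₃). -/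

import Mathlib

lemma fract_int_div (r m : ℤ) (hm : 0 < m) :
    Int.fract ((r : ℝ) / m) = ((r % m : ℤ) : ℝ) / m := by
  have hm' : (m : ℝ) ≠ 0 := by exact_mod_cast hm.ne'
  have key : (r : ℝ) = (m : ℝ) * ((r / m : ℤ) : ℝ) + ((r % m : ℤ) : ℝ) := by
    exact_mod_cast (Int.mul_ediv_add_emod r m).symm
  have h : (r : ℝ) / m = ((r / m : ℤ) : ℝ) + ((r % m : ℤ) : ℝ) / m := by
    field_simp
    linear_combination key
  rw [h, Int.fract_intCast_add, Int.fract_eq_self.mpr]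
  constructor
  · have : (0:ℤ) ≤ r % m := Int.emod_nonneg r hm.ne'
    have h2 : (0:ℝ) ≤ ((r % m : ℤ) : ℝ) := by exact_mod_cast this
    positivity
  · rw [div_lt_one (by exact_mod_cast hm)]
    exact_mod_cast Int.emod_lt_of_pos r hm

lemma popoviciu_aux (p q A qinv pinv : ℤ) (hp : 0 < p) (hq : 0 < q)
    (hq' : qinv * q ≡ 1 [ZMOD p]) (hp' : pinv * p ≡ 1 [ZMOD q]) (hA : 0 ≤ A) :
    (Nat.card {v : ℕ × ℕ // (v.1 : ℤ) * p + (v.2 : ℤ) * q = A} : ℝ)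
      = ((A : ℤ) : ℝ) / ((p * q : ℤ) : ℝ)
        - Int.fract (((qinv * A : ℤ) : ℝ) / (p : ℝ))
        - Int.fract (((pinv * A : ℤ) : ℝ) / (q : ℝ)) + 1 := by
  have hq1 : p ∣ qinv * q - 1 := (dvd_sub_comm).mp hq'.dvd
  have hp1 : q ∣ pinv * p - 1 := (dvd_sub_comm).mp hp'.dvd
  set c₀ : ℤ := (qinv * A) % p with hc₀def
  have hc₀0 : 0 ≤ c₀ := Int.emod_nonneg _ hp.ne'
  have hc₀p : c₀ < p := Int.emod_lt_of_pos _ hp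
  have h3 : p ∣ qinv * A - c₀ := ⟨qinv * A / p, by linear_combination (Int.mul_ediv_add_emod (qinv*A) p).symm⟩
  have hpd : p ∣ A - c₀ * q := by
    obtain ⟨t, ht⟩ := hq1
    obtain ⟨s, hs⟩ := h3
    exact ⟨-(A * t) + s * q, by linear_combination -A * ht + q * hs⟩
  set b₁ : ℤ := (A - c₀ * q) / p with hb₁def
  have hb₁ : p * b₁ = A - c₀ * q := Int.mul_ediv_cancel' hpd
  set D : ℤ := b₁ / q with hDdef
  have hD1 : 0 ≤ D + 1 := by
    have hbq : -q ≤ b₁ := by nlinarith [hb₁, hc₀p, hA, hq, hp]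
    have : (-1 : ℤ) ≤ D := (Int.le_ediv_iff_mul_le hq).mpr (by linarith)
    linarith
  -- key facts about solutions
  have key : ∀ b c : ℕ, (b : ℤ) * p + (c : ℤ) * q = A →
      0 ≤ ((c : ℤ) - c₀) / p ∧ ((c : ℤ) - c₀) / p ≤ D ∧
        p * (((c : ℤ) - c₀) / p) = (c : ℤ) - c₀ := by
    intro b c hbc
    have h1 : (c : ℤ) * q - c₀ * q = p * (b₁ - b) := by linear_combination hbc - hb₁
    obtain ⟨t, ht⟩ := (dvd_sub_comm).mp hq'.dvd
    have hcp : p ∣ (c : ℤ) - c₀ := by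
      refine ⟨qinv * (b₁ - b) - ((c:ℤ) - c₀) * t, ?_⟩
      linear_combination qinv * h1 - ((c:ℤ) - c₀) * ht
    have hk : p * (((c : ℤ) - c₀) / p) = (c : ℤ) - c₀ := Int.mul_ediv_cancel' hcp
    have hc0 : (0 : ℤ) ≤ (c : ℤ) := Int.natCast_nonneg c
    have hb0 : (0 : ℤ) ≤ (b : ℤ) := Int.natCast_nonneg b
    have hk0 : 0 ≤ ((c : ℤ) - c₀) / p := by
      by_contra hcon
      push_neg at hcon
      have : ((c : ℤ) - c₀) / p ≤ -1 := by omega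
      nlinarith [hk]
    refine ⟨hk0, ?_, hk⟩
    rw [hDdef]
    rw [Int.le_ediv_iff_mul_le hq]
    have hcq : (c : ℤ) * q ≤ A := by nlinarith [mul_nonneg hb0 hp.le]
    have : p * ((((c : ℤ) - c₀) / p) * q) ≤ p * b₁ := by
      rw [hb₁]
      calc p * ((((c : ℤ) - c₀) / p) * q) = (p * (((c : ℤ) - c₀) / p)) * q := by ring
        _ = ((c : ℤ) - c₀) * q := by rw [hk]
        _ ≤ A - c₀ * q := by nlinarith
    exact le_of_mul_le_mul_left this hp
  set N : ℕ := (D + 1).toNat with hNdef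
  have hN : (N : ℤ) = D + 1 := Int.toNat_of_nonneg hD1
  have hcard : Nat.card {v : ℕ × ℕ // (v.1 : ℤ) * p + (v.2 : ℤ) * q = A} = N := by
    apply Nat.card_eq_of_equiv_fin
    refine Equiv.ofBijective (fun s => ⟨(((s.1.2 : ℤ) - c₀) / p).toNat, ?_⟩) ⟨?_, ?_⟩
    · obtain ⟨hk0, hkD, hk⟩ := key s.1.1 s.1.2 s.2
      omega
    · rintro ⟨⟨b, c⟩, hbc⟩ ⟨⟨b', c'⟩, hbc'⟩ hfe
      simp only [Fin.mk.injEq] at hfe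
      obtain ⟨hk0, _, hk⟩ := key b c hbc
      obtain ⟨hk0', _, hk'⟩ := key b' c' hbc'
      have hkk : ((c : ℤ) - c₀) / p = ((c' : ℤ) - c₀) / p := by omega
      have hcc : (c : ℤ) = (c' : ℤ) := by
        have := hk'
        rw [← hkk] at this
        omega
      have hbb : (b : ℤ) * p = (b' : ℤ) * p := by
        rw [hcc] at hbc
        linarith [hbc, hbc']
      have hbZ : (b : ℤ) = (b' : ℤ) := mul_right_cancel₀ hp.ne' hbb
      have hb : b = b' := by exact_mod_cast hbZ
      have hc : c = c' := by exact_mod_cast hcc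
      subst hb; subst hc
      rfl
    · rintro ⟨j, hj⟩
      have hjD : (j : ℤ) ≤ D := by omega
      have hj0 : (0 : ℤ) ≤ (j : ℤ) := Int.natCast_nonneg j
      have hb₀q : 0 ≤ b₁ % q := Int.emod_nonneg _ hq.ne'
      have hDq : q * D + b₁ % q = b₁ := Int.mul_ediv_add_emod b₁ q
      have hbnn : 0 ≤ b₁ - (j : ℤ) * q := by nlinarith [mul_le_mul_of_nonneg_right hjD hq.le]
      have hcnn : 0 ≤ c₀ + (j : ℤ) * p := by positivity
      refine ⟨⟨⟨(b₁ - (j : ℤ) * q).toNat, (c₀ + (j : ℤ) * p).toNat⟩, ?_⟩, ?_⟩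
      · rw [Int.toNat_of_nonneg hbnn, Int.toNat_of_nonneg hcnn]
        linear_combination hb₁
      · apply Fin.ext
        simp only
        rw [Int.toNat_of_nonneg hcnn]
        have : (c₀ + (j : ℤ) * p - c₀) / p = (j : ℤ) := by
          rw [show c₀ + (j : ℤ) * p - c₀ = (j : ℤ) * p by ring]
          exact Int.mul_ediv_cancel _ hp.ne'
        rw [this]
        omega
  -- identify b₁ % q with (pinv * A) % q
  have hmod : b₁ % q = (pinv * A) % q := by
    obtain ⟨t, ht⟩ := hp1
    have : q ∣ pinv * A - b₁ := ⟨t * b₁ + pinv * c₀, by linear_combination b₁ * ht - pinv * hb₁⟩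
    exact (Int.modEq_iff_dvd.mpr this : Int.ModEq q b₁ (pinv * A))
  have hDq : q * D + b₁ % q = b₁ := Int.mul_ediv_add_emod b₁ q
  rw [hcard]
  rw [fract_int_div _ _ hp, fract_int_div _ _ hq]
  have hb₀0 : 0 ≤ b₁ % q := Int.emod_nonneg _ hq.ne'
  have hZ : (p * q) * (N : ℤ) = A - c₀ * q - p * (b₁ % q) + p * q := by
    rw [hN]
    linear_combination p * hDq + hb₁
  have hR : ((p : ℝ) * q) * (N : ℝ) = (A : ℝ) - (c₀ : ℝ) * q - (p : ℝ) * ((b₁ % q : ℤ) : ℝ) + (p : ℝ) * q := by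
    exact_mod_cast congrArg (Int.cast : ℤ → ℝ) hZ
  have hp' : (p : ℝ) ≠ 0 := by exact_mod_cast hp.ne'
  have hq'' : (q : ℝ) ≠ 0 := by exact_mod_cast hq.ne'
  rw [← hc₀def, ← hmod]
  push_cast
  apply mul_left_cancel₀ (mul_ne_zero hp' hq'')
  rw [hR]
  field_simp

/-- Generalized Popoviciu formula on the first fundamental cone, when the
minors `Y₁₂, Y₁₃, Y₂₃` are pairwise coprime. -/
theorem generalized_popoviciu_cone1
    (x1 y1 x2 y2 x3 y3 : ℤ)
    (hx1 : 0 < x1) (hx2 : 0 < x2) (hx3 : 0 < x3)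
    (h12 : y1 * x2 < y2 * x1) (h23 : y2 * x3 < y3 * x2)
    (Y12 Y13 Y23 : ℤ)
    (hY12 : Y12 = x1 * y2 - y1 * x2)
    (hY13 : Y13 = x1 * y3 - y1 * x3)
    (hY23 : Y23 = x2 * y3 - y2 * x3)
    (hc1 : IsCoprime Y12 Y13) (hc2 : IsCoprime Y12 Y23) (hc3 : IsCoprime Y13 Y23)
    (Y13inv Y12inv : ℤ)
    (hY13inv : Y13inv * Y13 ≡ 1 [ZMOD Y12])
    (hY12inv : Y12inv * Y12 ≡ 1 [ZMOD Y13])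
    (n1 n2 : ℤ)
    (hcone : ∃ l1 l2 : ℝ, 0 ≤ l1 ∧ 0 ≤ l2 ∧
      (n1 : ℝ) = l1 * x1 + l2 * x2 ∧ (n2 : ℝ) = l1 * y1 + l2 * y2) :
    (Nat.card {v : Fin 3 → ℕ //
        (v 0 : ℤ) * x1 + (v 1 : ℤ) * x2 + (v 2 : ℤ) * x3 = n1 ∧
        (v 0 : ℤ) * y1 + (v 1 : ℤ) * y2 + (v 2 : ℤ) * y3 = n2} : ℝ)
      = ((n2 * x1 - n1 * y1 : ℤ) : ℝ) / ((Y12 * Y13 : ℤ) : ℝ)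
        - Int.fract (((Y13inv * (n2 * x1 - n1 * y1) : ℤ) : ℝ) / (Y12 : ℝ))
        - Int.fract (((Y12inv * (n2 * x1 - n1 * y1) : ℤ) : ℝ) / (Y13 : ℝ)) + 1 := by
  subst hY12 hY13 hY23
  have hp12 : 0 < x1 * y2 - y1 * x2 := by nlinarith [h12]
  have hp23 : 0 < x2 * y3 - y2 * x3 := by nlinarith [h23]
  have hp13 : 0 < x1 * y3 - y1 * x3 := by
    nlinarith [mul_pos hx1 hp23, mul_pos hx3 hp12, hx2]
  obtain ⟨l1, l2, hl1, hl2, he1, he2⟩ := hcone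
  have hAr : ((n2 * x1 - n1 * y1 : ℤ) : ℝ) = l2 * ((x1 : ℝ) * y2 - (y1 : ℝ) * x2) := by
    push_cast
    rw [he1, he2]
    ring
  have hA : 0 ≤ n2 * x1 - n1 * y1 := by
    have h0 : (0 : ℝ) < (x1 : ℝ) * y2 - (y1 : ℝ) * x2 := by exact_mod_cast hp12
    have : (0 : ℝ) ≤ ((n2 * x1 - n1 * y1 : ℤ) : ℝ) := by
      rw [hAr]; exact mul_nonneg hl2 h0.le
    exact_mod_cast this
  have hB : n2 * x2 - n1 * y2 ≤ 0 := by
    have h0 : (0 : ℝ) < (x1 : ℝ) * y2 - (y1 : ℝ) * x2 := by exact_mod_cast hp12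
    have hBr : ((n2 * x2 - n1 * y2 : ℤ) : ℝ) = -(l1 * ((x1 : ℝ) * y2 - (y1 : ℝ) * x2)) := by
      push_cast
      rw [he1, he2]
      ring
    have : ((n2 * x2 - n1 * y2 : ℤ) : ℝ) ≤ 0 := by
      rw [hBr]
      simpa using mul_nonneg hl1 h0.le
    exact_mod_cast this
  have hequiv : {v : Fin 3 → ℕ //
        (v 0 : ℤ) * x1 + (v 1 : ℤ) * x2 + (v 2 : ℤ) * x3 = n1 ∧
        (v 0 : ℤ) * y1 + (v 1 : ℤ) * y2 + (v 2 : ℤ) * y3 = n2} ≃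
      {w : ℕ × ℕ // (w.1 : ℤ) * (x1 * y2 - y1 * x2) + (w.2 : ℤ) * (x1 * y3 - y1 * x3)
        = n2 * x1 - n1 * y1} := by
    refine Equiv.ofBijective (fun s => ⟨(s.1 1, s.1 2), ?_⟩) ⟨?_, ?_⟩
    · obtain ⟨e1, e2⟩ := s.2
      linear_combination x1 * e2 - y1 * e1
    · rintro ⟨v, hv1, hv2⟩ ⟨w, hw1, hw2⟩ h
      simp only [Subtype.mk.injEq, Prod.mk.injEq] at h
      obtain ⟨h1, h2⟩ := h
      have hv0 : (v 0 : ℤ) * x1 = (w 0 : ℤ) * x1 := by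
        rw [h1, h2] at hv1
        linarith [hw1]
      have hv0' : (v 0 : ℤ) = (w 0 : ℤ) := mul_right_cancel₀ hx1.ne' hv0
      have hv0'' : v 0 = w 0 := by exact_mod_cast hv0'
      apply Subtype.ext
      funext i
      fin_cases i
      · exact hv0''
      · exact h1
      · exact h2
    · rintro ⟨⟨b, c⟩, hbc⟩
      obtain ⟨u, w, huw⟩ := hc1
      simp only at hbc
      have hPQ : ((c : ℤ) * (x2 * y3 - y2 * x3) - (n2 * x2 - n1 * y2)) * (x1 * y3 - y1 * x3)
          = (-(n2 * x3 - n1 * y3) - (b : ℤ) * (x2 * y3 - y2 * x3)) * (x1 * y2 - y1 * x2) := by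
        linear_combination (x2 * y3 - y2 * x3) * hbc
      set a : ℤ := u * ((c : ℤ) * (x2 * y3 - y2 * x3) - (n2 * x2 - n1 * y2))
          + w * (-(n2 * x3 - n1 * y3) - (b : ℤ) * (x2 * y3 - y2 * x3)) with ha
      have haP : a * (x1 * y2 - y1 * x2)
          = (c : ℤ) * (x2 * y3 - y2 * x3) - (n2 * x2 - n1 * y2) := by
        rw [ha]
        linear_combination ((c : ℤ) * (x2 * y3 - y2 * x3) - (n2 * x2 - n1 * y2)) * huw
          - w * hPQ
      have hP0 : 0 ≤ (c : ℤ) * (x2 * y3 - y2 * x3) - (n2 * x2 - n1 * y2) := by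
        have hc0 : (0 : ℤ) ≤ (c : ℤ) := Int.natCast_nonneg c
        nlinarith [mul_nonneg hc0 hp23.le]
      have ha0 : 0 ≤ a := by
        have h0 : (0 : ℤ) * (x1 * y2 - y1 * x2) ≤ a * (x1 * y2 - y1 * x2) := by
          rw [haP]
          simpa using hP0
        exact le_of_mul_le_mul_right h0 hp12
      have hA2 : (x1 * y2 - y1 * x2) * (a * y1 + (b : ℤ) * y2 + (c : ℤ) * y3 - n2) = 0 := by
        linear_combination y1 * haP + y2 * hbc
      have hA1 : (x1 * y2 - y1 * x2) * (a * x1 + (b : ℤ) * x2 + (c : ℤ) * x3 - n1) = 0 := by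
        linear_combination x1 * haP + x2 * hbc
      have he2' : a * y1 + (b : ℤ) * y2 + (c : ℤ) * y3 = n2 := by
        rcases mul_eq_zero.mp hA2 with h | h
        · exact absurd h hp12.ne'
        · linarith
      have he1' : a * x1 + (b : ℤ) * x2 + (c : ℤ) * x3 = n1 := by
        rcases mul_eq_zero.mp hA1 with h | h
        · exact absurd h hp12.ne'
        · linarith
      refine ⟨⟨![a.toNat, b, c], ?_, ?_⟩, ?_⟩
      · show (a.toNat : ℤ) * x1 + (b : ℤ) * x2 + (c : ℤ) * x3 = n1
        rw [Int.toNat_of_nonneg ha0]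
        exact he1'
      · show (a.toNat : ℤ) * y1 + (b : ℤ) * y2 + (c : ℤ) * y3 = n2
        rw [Int.toNat_of_nonneg ha0]
        exact he2'
      · rfl
  rw [Nat.card_congr hequiv]
  exact popoviciu_aux (x1 * y2 - y1 * x2) (x1 * y3 - y1 * x3) (n2 * x1 - n1 * y1)
    Y13inv Y12inv hp12 hp13 hY13inv hY12inv hA
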